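/- Let λ > 0 and a = (a_1, a_{-1}) ∈ ℝ × ℝ^{q−1}. Let t* ∈ [0, λ] minimize the function t ↦ soft(a_1, t)² + Σ_{i=2}^q soft(a_i, λ − t)² over [0, λ], where soft(s, u) = sign(s)·max(|s| − u, 0). Then the vector b̂ = (soft(a_1, t*), soft(a_2, λ − t*), …, soft(a_q, λ − t*)) is a minimizer on ℝ^q of the hybrid ℓ₁/ℓ_∞-penalized proximal objective b ↦ λ·max(|b_1|, Σ_{i=2}^q |b_i|) + (1/2)‖b − a‖₂². -/
import Mathlib


/-- Scalar soft-thresholding: `soft(s, u) = sign(s)·max(|s| − u, 0)`. -/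
noncomputable def soft (s u : ℝ) : ℝ := Real.sign s * max (|s| - u) 0

lemma abs_soft (a u : ℝ) (hu : 0 ≤ u) : |soft a u| = max (|a| - u) 0 := by
  unfold soft
  rcases lt_trichotomy a 0 with h | h | h
  · rw [abs_mul, Real.sign_of_neg h]
    rw [abs_neg, abs_one, one_mul, abs_of_nonneg (le_max_right _ _)]
  · subst h
    simp only [Real.sign_zero, zero_mul, abs_zero]
    rw [max_eq_right (by linarith)]
  · rw [abs_mul, Real.sign_of_pos h, abs_one, one_mul,
      abs_of_nonneg (le_max_right _ _)]

lemma soft_sq (a u : ℝ) (hu : 0 ≤ u) : soft a u ^ 2 = (max (|a| - u) 0) ^ 2 := by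
  rw [← abs_soft a u hu, sq_abs]

lemma scalar_prox (a u x : ℝ) (hu : 0 ≤ u) :
    u * |soft a u| + (1/2) * (soft a u - a)^2 ≤ u * |x| + (1/2) * (x - a)^2 := by
  rcases le_or_gt |a| u with h | h
  · have hs : soft a u = 0 := by
      unfold soft; rw [max_eq_right (by linarith), mul_zero]
    rw [hs, abs_zero]
    have h1 : a * x ≤ |a| * |x| := (le_abs_self _).trans (abs_mul a x).le
    nlinarith [abs_nonneg x, sq_nonneg x, mul_nonneg (sub_nonneg.2 h) (abs_nonneg x)]
  · rcases lt_trichotomy a 0 with ha | ha | ha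
    · have hs : soft a u = a + u := by
        unfold soft
        rw [Real.sign_of_neg ha, abs_of_neg ha,
          max_eq_left (by rw [abs_of_neg ha] at h; linarith)]; ring
      have ha' : a + u < 0 := by rw [abs_of_neg ha] at h; linarith
      rw [hs, abs_of_neg ha']
      have := neg_abs_le x
      nlinarith [sq_nonneg (x - (a + u))]
    · exfalso; rw [ha, abs_zero] at h; linarith
    · have hs : soft a u = a - u := by
        unfold soft
        rw [Real.sign_of_pos ha, abs_of_pos ha,
          max_eq_left (by rw [abs_of_pos ha] at h; linarith)]; ring
      have ha' : 0 < a - u := by rw [abs_of_pos ha] at h; linarith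
      rw [hs, abs_of_pos ha']
      have := le_abs_self x
      nlinarith [sq_nonneg (x - (a - u))]

lemma sq_max_sub (c ε : ℝ) (hε : 0 ≤ ε) : (max (c - ε) 0)^2 ≤ (max c 0 - ε)^2 := by
  rcases le_or_gt ε c with h | h
  · rw [max_eq_left (by linarith), max_eq_left (by linarith)]
  · rw [max_eq_right (by linarith)]
    simpa using sq_nonneg (max c 0 - ε)

lemma sq_max_add (c ε : ℝ) (hε : 0 ≤ ε) : (max (c + ε) 0)^2 ≤ (max c 0 + ε)^2 := by
  have h1 : max (c + ε) 0 ≤ max c 0 + ε :=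
    max_le (by linarith [le_max_left c 0]) (by linarith [le_max_right c 0])
  have h0 : (0:ℝ) ≤ max (c + ε) 0 := le_max_right _ _
  nlinarith

/-- if `t* ∈ [0, λ]` minimizes
`t ↦ soft(a₁, t)² + Σᵢ soft(aᵢ, λ − t)²` over `[0, λ]`, then
`b̂ = (soft(a₁, t*), soft(a₋₁, λ − t*))` is a minimizer of the hybrid ℓ₁/ℓ_∞
proximal objective `b ↦ λ·max(|b₁|, Σᵢ|b₋₁ᵢ|) + (1/2)‖b − a‖₂²`. -/
theorem stmt_14 (m : ℕ) (l : ℝ) (hl : 0 < l)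
    (a1 : ℝ) (a2 : Fin m → ℝ)
    (tstar : ℝ) (htstar : tstar ∈ Set.Icc 0 l)
    (hmin : ∀ t ∈ Set.Icc 0 l,
      soft a1 tstar ^ 2 + ∑ i, soft (a2 i) (l - tstar) ^ 2 ≤
        soft a1 t ^ 2 + ∑ i, soft (a2 i) (l - t) ^ 2)
    (f : ℝ × (Fin m → ℝ) → ℝ)
    (hf : ∀ b, f b = l * max |b.1| (∑ i, |b.2 i|)
      + (1 / 2) * ((b.1 - a1) ^ 2 + ∑ i, (b.2 i - a2 i) ^ 2))
    (bhat : ℝ × (Fin m → ℝ))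
    (hbhat : bhat = (soft a1 tstar, fun i => soft (a2 i) (l - tstar))) :
    ∀ b, f bhat ≤ f b := by
  obtain ⟨ht0, htl⟩ := htstar
  intro b
  set B : ℝ := max (|a1| - tstar) 0 with hBdef
  set Si : Fin m → ℝ := fun i => max (|a2 i| - (l - tstar)) 0 with hSidef
  set S : ℝ := ∑ i, Si i with hSdef
  have hlt : (0:ℝ) ≤ l - tstar := by linarith
  have habs1 : |soft a1 tstar| = B := abs_soft _ _ ht0
  have habs2 : ∀ i, |soft (a2 i) (l - tstar)| = Si i := fun i => abs_soft _ _ hlt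
  have hB0 : 0 ≤ B := le_max_right _ _
  have hSi0 : ∀ i, 0 ≤ Si i := fun i => le_max_right _ _
  have hS0 : 0 ≤ S := Finset.sum_nonneg fun i _ => hSi0 i
  have hsq1 : soft a1 tstar ^ 2 = B ^ 2 := by rw [← habs1, sq_abs]
  have hsumsq : ∑ i, soft (a2 i) (l - tstar) ^ 2 = ∑ i, Si i ^ 2 :=
    Finset.sum_congr rfl fun i _ => by rw [← habs2 i, sq_abs]
  have hm1pos : (0:ℝ) < (m:ℝ) + 1 := by positivity
  have hsplit : l * max B S = tstar * B + (l - tstar) * S := by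
    rcases lt_trichotomy B S with hBS | hBS | hBS
    · have ht0' : tstar = 0 := by
        by_contra hne
        have htpos : 0 < tstar := lt_of_le_of_ne ht0 (Ne.symm hne)
        set ε := min tstar ((S - B) / ((m:ℝ) + 1)) with hεdef
        have hεpos : 0 < ε := lt_min htpos (div_pos (sub_pos.2 hBS) hm1pos)
        have hεt : ε ≤ tstar := min_le_left _ _
        have hεm : ((m:ℝ) + 1) * ε ≤ S - B := by
          have h := min_le_right tstar ((S - B) / ((m:ℝ) + 1))
          calc ((m:ℝ) + 1) * ε ≤ ((m:ℝ) + 1) * ((S - B) / ((m:ℝ) + 1)) :=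
                mul_le_mul_of_nonneg_left h hm1pos.le
            _ = S - B := by field_simp
        have hφ := hmin (tstar - ε) ⟨by linarith, by linarith⟩
        have hb1 : soft a1 (tstar - ε) ^ 2 ≤ (B + ε) ^ 2 := by
          rw [soft_sq _ _ (by linarith : (0:ℝ) ≤ tstar - ε),
            (by ring : |a1| - (tstar - ε) = (|a1| - tstar) + ε)]
          exact sq_max_add _ _ hεpos.le
        have hsum2 : ∑ i, soft (a2 i) (l - (tstar - ε)) ^ 2 ≤ ∑ i, (Si i - ε) ^ 2 := by
          refine Finset.sum_le_sum fun i _ => ?_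
          rw [soft_sq _ _ (by linarith : (0:ℝ) ≤ l - (tstar - ε)),
            (by ring : |a2 i| - (l - (tstar - ε)) = (|a2 i| - (l - tstar)) - ε)]
          exact sq_max_sub _ _ hεpos.le
        have hexp : ∑ i, (Si i - ε) ^ 2 = ∑ i, Si i ^ 2 - 2 * ε * S + (m:ℝ) * ε ^ 2 := by
          rw [Finset.sum_congr rfl (fun i _ =>
            (by ring : (Si i - ε) ^ 2 = Si i ^ 2 - (2 * ε) * Si i + ε ^ 2)),
            Finset.sum_add_distrib, Finset.sum_sub_distrib, ← Finset.mul_sum,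
            Finset.sum_const, Finset.card_univ, Fintype.card_fin, nsmul_eq_mul, ← hSdef]
        rw [hsq1, hsumsq] at hφ
        nlinarith [hφ, hb1, hsum2, hexp, mul_le_mul_of_nonneg_right hεm hεpos.le,
          mul_pos hεpos (sub_pos.2 hBS)]
      rw [ht0', max_eq_right hBS.le]; ring
    · rw [hBS, max_self]; ring
    · have htl' : tstar = l := by
        by_contra hne
        have htpos : 0 < l - tstar :=
          lt_of_le_of_ne hlt (fun h => hne (by linarith))
        set ε := min (l - tstar) ((B - S) / ((m:ℝ) + 1)) with hεdef
        have hεpos : 0 < ε := lt_min htpos (div_pos (sub_pos.2 hBS) hm1pos)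
        have hεt : ε ≤ l - tstar := min_le_left _ _
        have hεm : ((m:ℝ) + 1) * ε ≤ B - S := by
          have h := min_le_right (l - tstar) ((B - S) / ((m:ℝ) + 1))
          calc ((m:ℝ) + 1) * ε ≤ ((m:ℝ) + 1) * ((B - S) / ((m:ℝ) + 1)) :=
                mul_le_mul_of_nonneg_left h hm1pos.le
            _ = B - S := by field_simp
        have hφ := hmin (tstar + ε) ⟨by linarith, by linarith⟩
        have hb1 : soft a1 (tstar + ε) ^ 2 ≤ (B - ε) ^ 2 := by
          rw [soft_sq _ _ (by linarith : (0:ℝ) ≤ tstar + ε),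
            (by ring : |a1| - (tstar + ε) = (|a1| - tstar) - ε)]
          exact sq_max_sub _ _ hεpos.le
        have hsum2 : ∑ i, soft (a2 i) (l - (tstar + ε)) ^ 2 ≤ ∑ i, (Si i + ε) ^ 2 := by
          refine Finset.sum_le_sum fun i _ => ?_
          rw [soft_sq _ _ (by linarith : (0:ℝ) ≤ l - (tstar + ε)),
            (by ring : |a2 i| - (l - (tstar + ε)) = (|a2 i| - (l - tstar)) + ε)]
          exact sq_max_add _ _ hεpos.le
        have hexp : ∑ i, (Si i + ε) ^ 2 = ∑ i, Si i ^ 2 + 2 * ε * S + (m:ℝ) * ε ^ 2 := by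
          rw [Finset.sum_congr rfl (fun i _ =>
            (by ring : (Si i + ε) ^ 2 = Si i ^ 2 + ((2 * ε) * Si i + ε ^ 2))),
            Finset.sum_add_distrib, Finset.sum_add_distrib, ← Finset.mul_sum,
            Finset.sum_const, Finset.card_univ, Fintype.card_fin, nsmul_eq_mul, ← hSdef]
          ring
        rw [hsq1, hsumsq] at hφ
        nlinarith [hφ, hb1, hsum2, hexp, mul_le_mul_of_nonneg_right hεm hεpos.le,
          mul_pos hεpos (sub_pos.2 hBS)]
      rw [htl', max_eq_left hBS.le]; ring
  have h1 := scalar_prox a1 tstar b.1 ht0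
  rw [habs1] at h1
  have h2s := Finset.sum_le_sum (fun i (_ : i ∈ Finset.univ) =>
    scalar_prox (a2 i) (l - tstar) (b.2 i) hlt)
  have eL : ∑ i, ((l - tstar) * |soft (a2 i) (l - tstar)|
        + (1/2) * (soft (a2 i) (l - tstar) - a2 i) ^ 2)
      = (l - tstar) * S + (1/2) * ∑ i, (soft (a2 i) (l - tstar) - a2 i) ^ 2 := by
    rw [Finset.sum_add_distrib, ← Finset.mul_sum, ← Finset.mul_sum]
    congr 1
    rw [hSdef]
    congr 1
    exact Finset.sum_congr rfl fun i _ => habs2 i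
  have eR : ∑ i, ((l - tstar) * |b.2 i| + (1/2) * (b.2 i - a2 i) ^ 2)
      = (l - tstar) * ∑ i, |b.2 i| + (1/2) * ∑ i, (b.2 i - a2 i) ^ 2 := by
    rw [Finset.sum_add_distrib, ← Finset.mul_sum, ← Finset.mul_sum]
  rw [eL, eR] at h2s
  rw [hf, hf, hbhat]
  simp only
  rw [habs1, Finset.sum_congr rfl fun i (_ : i ∈ Finset.univ) => habs2 i]
  set M := max |b.1| (∑ i, |b.2 i|) with hM
  have hm1 : tstar * |b.1| ≤ tstar * M := mul_le_mul_of_nonneg_left (le_max_left _ _) ht0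
  have hm2 : (l - tstar) * (∑ i, |b.2 i|) ≤ (l - tstar) * M :=
    mul_le_mul_of_nonneg_left (le_max_right _ _) hlt
  have hMsplit : l * M = tstar * M + (l - tstar) * M := by ring
  linarith [h1, h2s, hsplit, hm1, hm2]
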